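/- Let K be a compact Hausdorff space. The set NM(C(K)) of bounded linear operators on C(K) that are not weak multipliers is either empty or spaceable in L(C(K)). -/

import Mathlib

open Filter Topology

/-- A bounded linear operator `T` on `C(K, ℝ)` is a *weak multiplier* if for every bounded
pairwise disjoint sequence `(e_n)` in `C(K, ℝ)` and every sequence `(x_n)` in `K` with
`e_n (x_n) = 0` for all `n`, one has `T (e_n) (x_n) → 0`. -/
def IsWeakMultiplier {K : Type*} [TopologicalSpace K] [CompactSpace K]
    (T : C(K, ℝ) →L[ℝ] C(K, ℝ)) : Prop :=
  ∀ (e : ℕ → C(K, ℝ)) (x : ℕ → K),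
    (∃ M : ℝ, ∀ n, ‖e n‖ ≤ M) →
    (∀ i j, i ≠ j → e i * e j = 0) →
    (∀ n, (e n) (x n) = 0) →
    Filter.Tendsto (fun n => (T (e n)) (x n)) Filter.atTop (nhds 0)

/-- An operator on `C(K, ℝ)` is *weakly compact* if the image of the closed unit ball has
compact closure in the weak topology. -/
def IsWeaklyCompactOp {K : Type*} [TopologicalSpace K] [CompactSpace K]
    (S : C(K, ℝ) →L[ℝ] C(K, ℝ)) : Prop :=
  IsCompact (closure ((toWeakSpace ℝ C(K, ℝ)) '' (S '' Metric.closedBall 0 1)))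

/-- An operator on `C(K, ℝ)` is a *weak multiplication* if it has the form `g•I + S` with
`g ∈ C(K, ℝ)` and `S` weakly compact. -/
def IsWeakMultiplication {K : Type*} [TopologicalSpace K] [CompactSpace K]
    (T : C(K, ℝ) →L[ℝ] C(K, ℝ)) : Prop :=
  ∃ (g : C(K, ℝ)) (S : C(K, ℝ) →L[ℝ] C(K, ℝ)),
    IsWeaklyCompactOp S ∧ T = ContinuousLinearMap.mul ℝ C(K, ℝ) g + S

/-- A subset `A` of a real vector space is *lineable* if `A ∪ {0}` contains an
infinite-dimensional subspace. -/
def Lineable {X : Type*} [AddCommGroup X] [Module ℝ X] (A : Set X) : Prop :=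
  ∃ W : Submodule ℝ X, ¬ FiniteDimensional ℝ W ∧ (W : Set X) ⊆ A ∪ {0}

/-- A subset `A` of a real normed space is *spaceable* if `A ∪ {0}` contains a closed
infinite-dimensional subspace. -/
def Spaceable {X : Type*} [NormedAddCommGroup X] [NormedSpace ℝ X] (A : Set X) : Prop :=
  ∃ W : Submodule ℝ X, IsClosed (W : Set X) ∧ ¬ FiniteDimensional ℝ W ∧ (W : Set X) ⊆ A ∪ {0}

set_option linter.unusedSectionVars false
set_option maxHeartbeats 1000000


section Helpers
variable {K : Type*} [TopologicalSpace K] [CompactSpace K]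

lemma disj_eval {ι : Type*} {e : ι → C(K, ℝ)} (h : ∀ i j, i ≠ j → e i * e j = 0)
    {i j : ι} (hij : i ≠ j) (s : K) : e i s = 0 ∨ e j s = 0 := by
  have h0 : (e i * e j) s = 0 := by rw [h i j hij]; rfl
  rw [ContinuousMap.mul_apply] at h0
  exact mul_eq_zero.mp h0

lemma norm_sum_le_of_disjoint {ι : Type*} {w : ι → C(K, ℝ)}
    (hw : ∀ i j, i ≠ j → w i * w j = 0) (c : ι → ℝ) (F : Finset ι) {b : ℝ} (hb : 0 ≤ b)
    (h : ∀ i ∈ F, |c i| * ‖w i‖ ≤ b) : ‖∑ i ∈ F, c i • w i‖ ≤ b := by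
  rw [ContinuousMap.norm_le _ hb]
  intro s
  have hev : (∑ i ∈ F, c i • w i) s = ∑ i ∈ F, c i * w i s := by
    simp [ContinuousMap.coe_sum]
  rw [hev]
  by_cases hz : ∀ i ∈ F, w i s = 0
  · rw [Finset.sum_eq_zero (fun i hi => by rw [hz i hi, mul_zero])]
    simpa using hb
  · push_neg at hz
    obtain ⟨i0, hi0F, hi0⟩ := hz
    rw [Finset.sum_eq_single_of_mem i0 hi0F (fun i hi hne => by
      rcases disj_eval hw hne s with h' | h'
      · rw [h', mul_zero]
      · exact absurd h' hi0)]
    have : ‖(c i0 * w i0 s : ℝ)‖ ≤ |c i0| * ‖w i0‖ := by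
      rw [Real.norm_eq_abs, abs_mul]
      exact mul_le_mul_of_nonneg_left (by
        simpa [Real.norm_eq_abs] using (w i0).norm_coe_le_norm s) (abs_nonneg _)
    calc ‖(c i0 * w i0 s : ℝ)‖ ≤ |c i0| * ‖w i0‖ := this
      _ ≤ b := h i0 hi0F

lemma summable_smul_of_disjoint {w : ℕ → C(K, ℝ)}
    (hw : ∀ i j, i ≠ j → w i * w j = 0) (hwb : ∀ k, ‖w k‖ ≤ 1) {c : ℕ → ℝ}
    (hc : Tendsto c atTop (𝓝 0)) : Summable (fun k => c k • w k) := by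
  rw [summable_iff_vanishing]
  intro U hU
  obtain ⟨ε, hε, hball⟩ := Metric.mem_nhds_iff.mp hU
  have : ∀ᶠ k in atTop, |c k| < ε / 2 := by
    have := Metric.tendsto_nhds.mp hc (ε / 2) (by linarith)
    simpa [Real.dist_eq] using this
  obtain ⟨N, hN⟩ := eventually_atTop.mp this
  refine ⟨Finset.range N, fun t ht => ?_⟩
  apply hball
  rw [Metric.mem_ball, dist_zero_right]
  have hle : ‖∑ i ∈ t, c i • w i‖ ≤ ε / 2 := by
    apply norm_sum_le_of_disjoint hw _ _ (by linarith)
    intro i hi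
    have hiN : N ≤ i := by
      by_contra hlt
      exact (Finset.disjoint_left.mp ht) hi (Finset.mem_range.mpr (by omega))
    calc |c i| * ‖w i‖ ≤ |c i| * 1 :=
          mul_le_mul_of_nonneg_left (hwb i) (abs_nonneg _)
      _ ≤ ε / 2 := by rw [mul_one]; exact le_of_lt (hN i hiN)
  linarith

lemma norm_tsum_le {E : Type*} [NormedAddCommGroup E] {f : ℕ → E} (hs : Summable f) {b : ℝ}
    (h : ∀ F : Finset ℕ, ‖∑ i ∈ F, f i‖ ≤ b) : ‖∑' i, f i‖ ≤ b := by
  have := hs.hasSum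
  have hn : Tendsto (fun F : Finset ℕ => ‖∑ i ∈ F, f i‖) atTop (𝓝 ‖∑' i, f i‖) :=
    (continuous_norm.tendsto _).comp this
  exact le_of_tendsto hn (Eventually.of_forall h)

lemma not_tendsto_of_bound {f : ℕ → ℝ} {c : ℝ} (hc : 0 < c) (h : ∀ n, c ≤ |f n|) :
    ¬ Tendsto f atTop (𝓝 0) := by
  intro ht
  have := Metric.tendsto_nhds.mp ht c hc
  obtain ⟨n, hn⟩ := this.exists
  rw [Real.dist_eq, sub_zero] at hn
  exact absurd (h n) (not_le.mpr hn)

lemma exists_eps_of_not_tendsto {f : ℕ → ℝ} (h : ¬ Tendsto f atTop (𝓝 0)) :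
    ∃ ε > 0, {n | ε ≤ |f n|}.Infinite := by
  by_contra hc
  push_neg at hc
  apply h
  rw [Metric.tendsto_nhds]
  intro ε hε
  have := hc ε hε
  have hev : ∀ᶠ n in atTop, ¬ (ε ≤ |f n|) := by
    rw [← Filter.not_frequently, Nat.frequently_atTop_iff_infinite]
    exact fun hinf => hinf.elim this  -- fix below maybe
  exact hev.mono (fun n hn => by rw [Real.dist_eq, sub_zero]; exact not_le.mp hn)

lemma tendsto_eval_zero_of_disjoint (φ : C(K, ℝ) →L[ℝ] ℝ) {e : ℕ → C(K, ℝ)}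
    (hd : ∀ i j, i ≠ j → e i * e j = 0) {M : ℝ} (hb : ∀ n, ‖e n‖ ≤ M) :
    Tendsto (fun n => φ (e n)) atTop (𝓝 0) := by
  have hM : 0 ≤ M := le_trans (norm_nonneg _) (hb 0)
  have habs : Summable (fun n => |φ (e n)|) := by
    apply summable_of_sum_le (fun n => abs_nonneg _)
    intro F
    set σ : ℕ → ℝ := fun n => if 0 ≤ φ (e n) then 1 else -1 with hσ
    have h1 : ∀ n, |φ (e n)| = σ n * φ (e n) := by
      intro n
      by_cases h0 : 0 ≤ φ (e n)
      · simp [hσ, h0, abs_of_nonneg h0]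
      · simp [hσ, h0, abs_of_neg (not_le.mp h0)]
    calc ∑ n ∈ F, |φ (e n)| = ∑ n ∈ F, φ (σ n • e n) := by
          refine Finset.sum_congr rfl (fun n _ => ?_)
          rw [h1 n, map_smul, smul_eq_mul]
      _ = φ (∑ n ∈ F, σ n • e n) := (map_sum φ _ _).symm
      _ ≤ |φ (∑ n ∈ F, σ n • e n)| := le_abs_self _
      _ ≤ ‖φ‖ * ‖∑ n ∈ F, σ n • e n‖ := by
          simpa [Real.norm_eq_abs] using φ.le_opNorm (∑ n ∈ F, σ n • e n)
      _ ≤ ‖φ‖ * M := by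
          refine mul_le_mul_of_nonneg_left ?_ (norm_nonneg φ)
          refine norm_sum_le_of_disjoint hd σ F hM (fun i _ => ?_)
          have : |σ i| = 1 := by by_cases h0 : 0 ≤ φ (e i) <;> simp [hσ, h0]
          rw [this, one_mul]; exact hb i
  have := habs.tendsto_atTop_zero
  exact squeeze_zero_norm (fun n => by rw [Real.norm_eq_abs]) this

end Helpers


local notation "X₀" => ZeroAtInftyContinuousMap ℕ ℝ

lemma c0_apply_le (t : X₀) (n : ℕ) : |t n| ≤ ‖t‖ := by
  rw [← ZeroAtInftyContinuousMap.norm_toBCF_eq_norm]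
  simpa [Real.norm_eq_abs] using t.toBCF.norm_coe_le_norm n

lemma c0_norm_le (t : X₀) {b : ℝ} (hb : 0 ≤ b) (h : ∀ n, |t n| ≤ b) : ‖t‖ ≤ b := by
  rw [← ZeroAtInftyContinuousMap.norm_toBCF_eq_norm]
  exact (BoundedContinuousFunction.norm_le hb).mpr (fun n => by
    simpa [Real.norm_eq_abs] using h n)

lemma c0_tendsto (t : X₀) : Tendsto (fun n => t n) atTop (𝓝 0) := by
  have := t.zero_at_infty'
  rwa [cocompact_eq_cofinite, Nat.cofinite_eq_atTop] at this

noncomputable def c0delta (j : ℕ) : X₀ :=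
  ⟨⟨fun n => if n = j then (1 : ℝ) else 0, continuous_of_discreteTopology⟩, by
    rw [cocompact_eq_cofinite]
    have : ∀ᶠ n in cofinite, (if n = j then (1 : ℝ) else 0) = 0 := by
      refine (Set.Finite.eventually_cofinite_notMem (Set.finite_singleton j)).mono ?_
      intro n hn
      simp only [Set.mem_singleton_iff] at hn
      simp [hn]
    exact Tendsto.congr' (this.mono fun n hn => hn.symm) tendsto_const_nhds⟩

noncomputable def c0eval (n : ℕ) : X₀ →ₗ[ℝ] ℝ where
  toFun t := t n
  map_add' s t := rfl
  map_smul' c t := rfl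

lemma c0_linearIndependent : LinearIndependent ℝ c0delta := by
  rw [linearIndependent_iff']
  intro s g h i hi
  have := congrArg (c0eval i) h
  rw [map_sum, map_zero] at this
  rw [← this]
  rw [Finset.sum_eq_single_of_mem i hi]
  · simp [c0eval, c0delta]
  · intro j hj hne
    simp only [c0eval, c0delta, map_smul, smul_eq_mul]
    simp [ZeroAtInftyContinuousMap.coe_mk, hne, LinearMap.coe_mk]
    intro hij
    exact absurd hij.symm hne

lemma c0_not_finiteDimensional : ¬ FiniteDimensional ℝ X₀ := by
  intro h
  have h1 := c0_linearIndependent.cardinal_lift_le_rank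
  have h2 : Module.rank ℝ X₀ < Cardinal.aleph0 := by
    exact Module.rank_lt_aleph0 ℝ X₀
  rw [Cardinal.mk_nat] at h1
  simp only [Cardinal.lift_aleph0] at h1
  have := h1.trans_lt (Cardinal.lift_lt.mpr h2)
  simp at this

lemma spaceable_of_embedding {Y : Type*} [NormedAddCommGroup Y] [NormedSpace ℝ Y]
    {X : Type*} [NormedAddCommGroup X] [NormedSpace ℝ X] [CompleteSpace X]
    (hX : ¬ FiniteDimensional ℝ X) (A : Set Y) (Φ : X →L[ℝ] Y) {c : ℝ} (hc : 0 < c)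
    (hlow : ∀ v, c * ‖v‖ ≤ ‖Φ v‖) (hmem : ∀ v, v ≠ 0 → Φ v ∈ A) :
    ∃ W : Submodule ℝ Y, IsClosed (W : Set Y) ∧ ¬ FiniteDimensional ℝ W ∧
      (W : Set Y) ⊆ A ∪ {0} := by
  have hinj : Function.Injective Φ := by
    intro a b hab
    have : Φ (a - b) = 0 := by rw [map_sub, hab, sub_self]
    have h0 := hlow (a - b)
    rw [this, norm_zero] at h0
    have : ‖a - b‖ ≤ 0 := by nlinarith [norm_nonneg (a - b)]
    rw [← sub_eq_zero]
    exact norm_le_zero_iff.mp this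
  refine ⟨LinearMap.range (Φ : X →ₗ[ℝ] Y), ?_, ?_, ?_⟩
  · have hanti : AntilipschitzWith (⟨c, hc.le⟩ : NNReal)⁻¹ Φ :=
      ContinuousLinearMap.antilipschitz_of_bound Φ (fun x => by
        have hcc : (((⟨c, hc.le⟩ : NNReal)⁻¹ : NNReal) : ℝ) = c⁻¹ := by
          exact NNReal.coe_inv _
        rw [hcc, inv_mul_eq_div, le_div_iff₀ hc]
        simpa [mul_comm] using hlow x)
    have := hanti.isClosed_range Φ.uniformContinuous
    convert this using 1
    exact LinearMap.coe_range _
  · intro hfd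
    apply hX
    exact FiniteDimensional.of_injective
      ((Φ : X →ₗ[ℝ] Y).rangeRestrict)
      (fun a b hab => hinj (congrArg Subtype.val hab))
  · rintro y ⟨v, rfl⟩
    by_cases hv : v = 0
    · right; simp [hv]
    · left; exact hmem v hv


section Split
variable {K : Type*} [TopologicalSpace K] [CompactSpace K] [T2Space K]

/-- If no subsequence of `x` converges, any infinite index set can be split into two infinite
pieces whose images lie in open sets with disjoint closures. -/
lemma exists_split (x : ℕ → K)
    (hnc : ∀ (p : K) (ψ : ℕ → ℕ), StrictMono ψ → ¬ Tendsto (x ∘ ψ) atTop (𝓝 p))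
    (S : Set ℕ) (hS : S.Infinite) :
    ∃ U V : Set K, IsOpen U ∧ IsOpen V ∧ Disjoint (closure U) (closure V) ∧
      {n | n ∈ S ∧ x n ∈ U}.Infinite ∧ {n | n ∈ S ∧ x n ∈ V}.Infinite := by
  have hSp : {n | n ∈ S}.Infinite := hS
  set ψ : ℕ → ℕ := Nat.nth (· ∈ S) with hψdef
  have hψ : StrictMono ψ := Nat.nth_strictMono hSp
  set y : ℕ → K := x ∘ ψ with hydef
  -- first cluster point
  have hne : (Filter.map y atTop).NeBot := map_neBot
  obtain ⟨p, -, hp⟩ := isCompact_univ.exists_clusterPt (f := Filter.map y atTop)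
    (le_principal_iff.mpr univ_mem)
  have hny : ¬ Tendsto y atTop (𝓝 p) := hnc p ψ hψ
  -- a neighborhood frequently avoided
  obtain ⟨s, hs, hfreq⟩ : ∃ s ∈ 𝓝 p, ∃ᶠ n in atTop, y n ∉ s := by
    by_contra hcon
    push_neg at hcon
    apply hny
    intro s hs
    have := hcon s hs
    simpa using this
  obtain ⟨W, hWs, hWo, hpW⟩ := mem_nhds_iff.mp hs
  have hfreqW : ∃ᶠ n in atTop, n ∈ {n | y n ∉ W} :=
    hfreq.mono (fun n h hW => h (hWs hW))
  set S' : Set ℕ := {n | y n ∉ W} with hS'def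
  have hS' : S'.Infinite := Nat.frequently_atTop_iff_infinite.mp hfreqW
  have hne2 : (atTop ⊓ 𝓟 S').NeBot := by
    rw [← Filter.frequently_mem_iff_neBot]
    exact hfreqW
  have hmap2 : (Filter.map y (atTop ⊓ 𝓟 S')).NeBot := map_neBot
  obtain ⟨q, -, hq'⟩ := isCompact_univ.exists_clusterPt (f := Filter.map y (atTop ⊓ 𝓟 S'))
    (le_principal_iff.mpr univ_mem)
  have hq : ClusterPt q (Filter.map y atTop) := hq'.mono (map_mono inf_le_left)
  have hqW : q ∉ W := by
    have hle : Filter.map y (atTop ⊓ 𝓟 S') ≤ 𝓟 Wᶜ := by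
      refine le_trans (map_mono inf_le_right) ?_
      rw [Filter.map_principal, le_principal_iff, mem_principal]
      rintro z ⟨n, hn, rfl⟩
      exact hn
    have : q ∈ closure Wᶜ := mem_closure_iff_clusterPt.mpr (hq'.mono hle)
    rwa [IsClosed.closure_eq hWo.isClosed_compl] at this
  have hpq : p ≠ q := fun h => hqW (h ▸ hpW)
  -- separate p and q by opens with disjoint closures
  obtain ⟨U0, V0, hU0, hV0, hpU0, hqV0, hdUV⟩ := t2_separation hpq
  obtain ⟨CU, hCUn, hCUc, hCUs⟩ := exists_mem_nhds_isClosed_subset (hU0.mem_nhds hpU0)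
  obtain ⟨CV, hCVn, hCVc, hCVs⟩ := exists_mem_nhds_isClosed_subset (hV0.mem_nhds hqV0)
  refine ⟨interior CU, interior CV, isOpen_interior, isOpen_interior, ?_, ?_, ?_⟩
  · have h1 : closure (interior CU) ⊆ U0 :=
      subset_trans (closure_mono interior_subset) (by rw [hCUc.closure_eq]; exact hCUs)
    have h2 : closure (interior CV) ⊆ V0 :=
      subset_trans (closure_mono interior_subset) (by rw [hCVc.closure_eq]; exact hCVs)
    exact Set.disjoint_of_subset h1 h2 hdUV
  · -- p-side frequency
    have hp' : MapClusterPt p atTop y := hp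
    have hfU : ∃ᶠ n in atTop, y n ∈ interior CU :=
      (mapClusterPt_iff_frequently.mp hp') _
        (isOpen_interior.mem_nhds (mem_interior_iff_mem_nhds.mpr hCUn))
    have hinf : {n | y n ∈ interior CU}.Infinite :=
      Nat.frequently_atTop_iff_infinite.mp hfU
    have himg : (ψ '' {n | y n ∈ interior CU}).Infinite :=
      hinf.image ((hψ.injective).injOn)
    refine himg.mono ?_
    rintro m ⟨n, hn, rfl⟩
    exact ⟨Nat.nth_mem_of_infinite hSp n, hn⟩
  · -- q-side frequency
    have hq'' : MapClusterPt q atTop y := hq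
    have hfV : ∃ᶠ n in atTop, y n ∈ interior CV :=
      (mapClusterPt_iff_frequently.mp hq'') _
        (isOpen_interior.mem_nhds (mem_interior_iff_mem_nhds.mpr hCVn))
    have hinf : {n | y n ∈ interior CV}.Infinite :=
      Nat.frequently_atTop_iff_infinite.mp hfV
    have himg : (ψ '' {n | y n ∈ interior CV}).Infinite :=
      hinf.image ((hψ.injective).injOn)
    refine himg.mono ?_
    rintro m ⟨n, hn, rfl⟩
    exact ⟨Nat.nth_mem_of_infinite hSp n, hn⟩

end Split

section Blocks
variable {K : Type*} [TopologicalSpace K] [CompactSpace K] [T2Space K]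

-- assume exists_split available; here we restate as hypothesis for modular compile test
lemma caseA_blocks (x : ℕ → K)
    (hsplit : ∀ S : Set ℕ, S.Infinite →
      ∃ U V : Set K, IsOpen U ∧ IsOpen V ∧ Disjoint (closure U) (closure V) ∧
        {n | n ∈ S ∧ x n ∈ U}.Infinite ∧ {n | n ∈ S ∧ x n ∈ V}.Infinite) :
    ∃ (B : ℕ → Set ℕ) (v : ℕ → C(K, ℝ)),
      (∀ j, (B j).Infinite) ∧ (∀ j s, v j s ∈ Set.Icc (0:ℝ) 1) ∧
      (∀ i j, i ≠ j → v i * v j = 0) ∧ (∀ j n, n ∈ B j → v j (x n) = 1) := by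
  classical
  choose U V hUo hVo hdisj hUinf hVinf using hsplit
  -- recursive sequence of infinite sets
  let F : ℕ → {S : Set ℕ // S.Infinite} := fun j => Nat.rec
    ⟨Set.univ, Set.infinite_univ⟩
    (fun _ Sj => ⟨{n | n ∈ Sj.1 ∧ x n ∈ V Sj.1 Sj.2}, hVinf Sj.1 Sj.2⟩) j
  have hFsucc : ∀ j, (F (j+1)).1 = {n | n ∈ (F j).1 ∧ x n ∈ V (F j).1 (F j).2} := fun j => rfl
  let Uj : ℕ → Set K := fun j => U (F j).1 (F j).2
  let Vj : ℕ → Set K := fun j => V (F j).1 (F j).2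
  let B : ℕ → Set ℕ := fun j => {n | n ∈ (F j).1 ∧ x n ∈ Uj j}
  have hBinf : ∀ j, (B j).Infinite := fun j => hUinf (F j).1 (F j).2
  have hFmono : ∀ j, (F (j+1)).1 ⊆ (F j).1 := by
    intro j n hn
    rw [hFsucc j] at hn
    exact hn.1
  have hFV : ∀ i j, i < j → ∀ n ∈ (F j).1, x n ∈ Vj i := by
    intro i j hij
    induction j with
    | zero => omega
    | succ j ih =>
      intro n hn
      rcases Nat.lt_succ_iff_lt_or_eq.mp hij with h | h
      · exact ih h n (hFmono j hn)
      · subst h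
        rw [hFsucc i] at hn
        exact hn.2
  -- Urysohn functions
  have ha : ∀ j, ∃ a : C(K, ℝ), Set.EqOn a 0 (closure (Vj j)) ∧
      Set.EqOn a 1 (closure (Uj j)) ∧ ∀ s, a s ∈ Set.Icc (0:ℝ) 1 := by
    intro j
    exact exists_continuous_zero_one_of_isClosed isClosed_closure isClosed_closure
      (hdisj (F j).1 (F j).2).symm
  choose a ha0 ha1 haI using ha
  let A : ℕ → C(K, ℝ) := fun j =>
    ⟨fun s => max (2 * a j s - 1) 0, by fun_prop⟩
  let Pf : ℕ → C(K, ℝ) := fun i =>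
    ⟨fun s => max (1 - 2 * a i s) 0, by fun_prop⟩
  let v : ℕ → C(K, ℝ) := fun j => A j * ∏ i ∈ Finset.range j, Pf i
  have hvicc : ∀ j s, v j s ∈ Set.Icc (0:ℝ) 1 := by
    intro j s
    have hA : A j s ∈ Set.Icc (0:ℝ) 1 := by
      constructor
      · exact le_max_right _ _
      · have := (haI j s).2
        apply max_le (by linarith) zero_le_one
    have hP : (∏ i ∈ Finset.range j, Pf i) s ∈ Set.Icc (0:ℝ) 1 := by
      rw [ContinuousMap.coe_prod, Finset.prod_apply]
      constructor
      · exact Finset.prod_nonneg (fun i _ => le_max_right _ _)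
      · apply Finset.prod_le_one (fun i _ => le_max_right _ _)
        intro i _
        have := (haI i s).1
        apply max_le (by linarith) zero_le_one
    constructor
    · exact mul_nonneg hA.1 hP.1
    · calc A j s * (∏ i ∈ Finset.range j, Pf i) s ≤ 1 * 1 :=
          mul_le_mul hA.2 hP.2 hP.1 zero_le_one
        _ = 1 := one_mul 1
  have hvmul : ∀ s, ∀ i j, i < j → v i s = 0 ∨ v j s = 0 := by
    intro s i j hij
    by_cases h : a i s ≤ 1/2
    · left
      have : max (2 * a i s - 1) 0 = 0 := max_eq_right (by linarith)
      show A i s * _ = 0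
      have hAi : A i s = 0 := this
      rw [hAi, zero_mul]
    · right
      show A j s * (∏ k ∈ Finset.range j, Pf k) s = 0
      rw [ContinuousMap.coe_prod, Finset.prod_apply]
      have : Pf i s = 0 := max_eq_right (by push_neg at h; linarith)
      rw [Finset.prod_eq_zero (Finset.mem_range.mpr hij) this, mul_zero]
  have hvdisj : ∀ i j, i ≠ j → v i * v j = 0 := by
    intro i j hij
    ext s
    rw [ContinuousMap.mul_apply, ContinuousMap.zero_apply]
    rcases Nat.lt_or_ge i j with h | h
    · rcases hvmul s i j h with h' | h' <;> rw [h'] <;> ring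
    · have hlt : j < i := lt_of_le_of_ne h (Ne.symm hij)
      rcases hvmul s j i hlt with h' | h' <;> rw [h'] <;> ring
  have hvone : ∀ j n, n ∈ B j → v j (x n) = 1 := by
    intro j n hn
    have hxU : x n ∈ closure (Uj j) := subset_closure hn.2
    have hAj : A j (x n) = 1 := by
      show max (2 * a j (x n) - 1) 0 = 1
      rw [ha1 j hxU]
      norm_num
    have hPj : (∏ i ∈ Finset.range j, Pf i) (x n) = 1 := by
      rw [ContinuousMap.coe_prod, Finset.prod_apply]
      apply Finset.prod_eq_one
      intro i hi
      have hxV : x n ∈ closure (Vj i) :=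
        subset_closure (hFV i j (Finset.mem_range.mp hi) n hn.1)
      show max (1 - 2 * a i (x n)) 0 = 1
      rw [ha0 i hxV]
      norm_num
    show A j (x n) * _ = 1
    rw [hAj, hPj, one_mul]
  exact ⟨B, v, hBinf, hvicc, hvdisj, hvone⟩

end Blocks
section CaseA
variable {K : Type*} [TopologicalSpace K] [CompactSpace K] [T2Space K]

lemma caseA_spaceable (T : C(K, ℝ) →L[ℝ] C(K, ℝ)) (e : ℕ → C(K, ℝ)) (x : ℕ → K)
    {M ε : ℝ} (hM : 0 < M) (hε : 0 < ε)
    (hd : ∀ i j, i ≠ j → e i * e j = 0) (hbd : ∀ n, ‖e n‖ ≤ M)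
    (hz : ∀ n, (e n) (x n) = 0) (hlow : ∀ n, ε ≤ |(T (e n)) (x n)|)
    (B : ℕ → Set ℕ) (v : ℕ → C(K, ℝ)) (hBinf : ∀ j, (B j).Infinite)
    (hvicc : ∀ j s, v j s ∈ Set.Icc (0:ℝ) 1)
    (hvdisj : ∀ i j, i ≠ j → v i * v j = 0)
    (hvone : ∀ j n, n ∈ B j → v j (x n) = 1) :
    ∃ W : Submodule ℝ (C(K, ℝ) →L[ℝ] C(K, ℝ)),
      IsClosed (W : Set (C(K, ℝ) →L[ℝ] C(K, ℝ))) ∧ ¬ FiniteDimensional ℝ W ∧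
      (W : Set (C(K, ℝ) →L[ℝ] C(K, ℝ))) ⊆ {T' | ¬ IsWeakMultiplier T'} ∪ {0} := by
  classical
  have hv1 : ∀ j, ‖v j‖ ≤ 1 := by
    intro j
    rw [ContinuousMap.norm_le _ zero_le_one]
    intro s
    rw [Real.norm_eq_abs, abs_le]
    exact ⟨by linarith [(hvicc j s).1], (hvicc j s).2⟩
  have hsum : ∀ t : X₀, Summable (fun j => t j • v j) :=
    fun t => summable_smul_of_disjoint hvdisj hv1 (c0_tendsto t)
  -- the multiplier function
  let gl : X₀ →ₗ[ℝ] C(K, ℝ) :=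
    { toFun := fun t => ∑' j, t j • v j
      map_add' := by
        intro s t
        rw [← Summable.tsum_add (hsum s) (hsum t)]
        apply tsum_congr
        intro j
        have : (s + t) j = s j + t j := rfl
        rw [this, add_smul]
      map_smul' := by
        intro c t
        simp only [RingHom.id_apply]
        rw [← Summable.tsum_const_smul c (hsum t)]
        apply tsum_congr
        intro j
        have : (c • t) j = c * t j := rfl
        rw [this, smul_smul] }
  have hg_norm : ∀ t : X₀, ‖gl t‖ ≤ ‖t‖ := by
    intro t
    apply norm_tsum_le (hsum t)
    intro F
    apply norm_sum_le_of_disjoint hvdisj _ F (norm_nonneg t)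
    intro i _
    calc |t i| * ‖v i‖ ≤ ‖t‖ * 1 :=
        mul_le_mul (c0_apply_le t i) (hv1 i) (norm_nonneg _) (norm_nonneg _)
      _ = ‖t‖ := mul_one _
  have hg_eval : ∀ (t : X₀) (j : ℕ) (n : ℕ), n ∈ B j → (gl t) (x n) = t j := by
    intro t j n hn
    have hmap := (ContinuousMap.evalCLM ℝ (x n)).map_tsum (hsum t)
    have h0 : (gl t) (x n) = ∑' j', (t j' • v j') (x n) := hmap
    rw [h0]
    have h1 : ∀ j', (t j' • v j') (x n) = t j' * v j' (x n) := fun j' => rfl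
    calc (∑' j', (t j' • v j') (x n)) = (t j • v j) (x n) := by
          apply tsum_eq_single
          intro j' hj'
          rw [h1 j']
          have hvz : v j' (x n) = 0 := by
            have := congrArg (fun f : C(K, ℝ) => f (x n)) (hvdisj j' j hj')
            simp only [ContinuousMap.mul_apply, ContinuousMap.zero_apply] at this
            rcases mul_eq_zero.mp this with h' | h'
            · exact h'
            · exfalso
              rw [hvone j n hn] at h'
              norm_num at h'
          rw [hvz, mul_zero]
      _ = t j := by rw [h1, hvone j n hn, mul_one]
  -- the linear map into operators
  let Φl : X₀ →ₗ[ℝ] (C(K, ℝ) →L[ℝ] C(K, ℝ)) :=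
    { toFun := fun t => (ContinuousLinearMap.mul ℝ C(K, ℝ) (gl t)).comp T
      map_add' := by
        intro s t
        show (ContinuousLinearMap.mul ℝ C(K, ℝ) (gl (s + t))).comp T
            = (ContinuousLinearMap.mul ℝ C(K, ℝ) (gl s)).comp T
              + (ContinuousLinearMap.mul ℝ C(K, ℝ) (gl t)).comp T
        rw [map_add gl, map_add (ContinuousLinearMap.mul ℝ C(K, ℝ)),
          ContinuousLinearMap.add_comp]
      map_smul' := by
        intro c t
        show (ContinuousLinearMap.mul ℝ C(K, ℝ) (gl (c • t))).comp T
            = c • (ContinuousLinearMap.mul ℝ C(K, ℝ) (gl t)).comp T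
        rw [map_smul gl, map_smul (ContinuousLinearMap.mul ℝ C(K, ℝ)),
          ContinuousLinearMap.smul_comp] }
  have hΦbound : ∀ t : X₀, ‖Φl t‖ ≤ ‖T‖ * ‖t‖ := by
    intro t
    calc ‖(ContinuousLinearMap.mul ℝ C(K, ℝ) (gl t)).comp T‖
        ≤ ‖ContinuousLinearMap.mul ℝ C(K, ℝ) (gl t)‖ * ‖T‖ :=
          ContinuousLinearMap.opNorm_comp_le _ _
      _ ≤ ‖gl t‖ * ‖T‖ := by
          exact mul_le_mul_of_nonneg_right
            (ContinuousLinearMap.opNorm_mul_apply_le ℝ C(K, ℝ) (gl t)) (norm_nonneg T)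
      _ ≤ ‖t‖ * ‖T‖ := mul_le_mul_of_nonneg_right (hg_norm t) (norm_nonneg T)
      _ = ‖T‖ * ‖t‖ := mul_comm _ _
  let Φ : X₀ →L[ℝ] (C(K, ℝ) →L[ℝ] C(K, ℝ)) :=
    LinearMap.mkContinuous (𝕜 := ℝ) (𝕜₂ := ℝ) (E := X₀) (F := C(K, ℝ) →L[ℝ] C(K, ℝ)) Φl ‖T‖ hΦbound
  have hΦapp : ∀ (t : X₀) (f : C(K, ℝ)), Φ t f = (gl t) * (T f) := by
    intro t f
    show (ContinuousLinearMap.mul ℝ C(K, ℝ) (gl t)).comp T f = _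
    rw [ContinuousLinearMap.comp_apply, ContinuousLinearMap.mul_apply']
  have hval : ∀ (t : X₀) (j n : ℕ), n ∈ B j →
      (Φ t (e n)) (x n) = t j * (T (e n)) (x n) := by
    intro t j n hn
    rw [hΦapp, ContinuousMap.mul_apply, hg_eval t j n hn]
  -- lower norm bound
  have hΦlow : ∀ t : X₀, (ε / M) * ‖t‖ ≤ ‖Φ t‖ := by
    intro t
    have hcoord : ∀ j, |t j| ≤ (M / ε) * ‖Φ t‖ := by
      intro j
      obtain ⟨n, hn⟩ := (hBinf j).nonempty
      have h1 : |t j| * ε ≤ |(Φ t (e n)) (x n)| := by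
        rw [hval t j n hn, abs_mul]
        exact mul_le_mul_of_nonneg_left (hlow n) (abs_nonneg _)
      have h2 : |(Φ t (e n)) (x n)| ≤ ‖Φ t‖ * M := by
        calc |(Φ t (e n)) (x n)| ≤ ‖Φ t (e n)‖ := by
              simpa [Real.norm_eq_abs] using (Φ t (e n)).norm_coe_le_norm (x n)
          _ ≤ ‖Φ t‖ * ‖e n‖ := (Φ t).le_opNorm (e n)
          _ ≤ ‖Φ t‖ * M :=
            mul_le_mul_of_nonneg_left (hbd n) (ContinuousLinearMap.opNorm_nonneg _)
      have h3 := le_trans h1 h2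
      rw [div_mul_eq_mul_div, le_div_iff₀ hε]
      nlinarith
    have := c0_norm_le t (b := M / ε * ‖Φ t‖)
      (mul_nonneg (le_of_lt (div_pos hM hε)) (ContinuousLinearMap.opNorm_nonneg _)) hcoord
    rw [div_mul_eq_mul_div, div_le_iff₀ hM]
    calc ε * ‖t‖ ≤ ε * ((M / ε) * ‖Φ t‖) := mul_le_mul_of_nonneg_left this hε.le
      _ = ‖Φ t‖ * M := by field_simp
  -- membership
  have hΦmem : ∀ t : X₀, t ≠ 0 → ¬ IsWeakMultiplier (Φ t) := by
    intro t ht hwm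
    have hj : ∃ j, t j ≠ 0 := by
      by_contra hc
      push_neg at hc
      exact ht (by ext n; exact hc n)
    obtain ⟨j, htj⟩ := hj
    have hBj : {n | n ∈ B j}.Infinite := hBinf j
    set ν : ℕ → ℕ := Nat.nth (· ∈ B j) with hν
    have hνmono : StrictMono ν := Nat.nth_strictMono hBj
    have hνmem : ∀ i, ν i ∈ B j := fun i => Nat.nth_mem_of_infinite hBj i
    have htt := hwm (fun i => e (ν i)) (fun i => x (ν i))
      ⟨M, fun i => hbd (ν i)⟩
      (fun i i' hne => hd (ν i) (ν i') (fun hh => hne (hνmono.injective hh)))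
      (fun i => hz (ν i))
    apply not_tendsto_of_bound (mul_pos (abs_pos.mpr htj) hε) _ htt
    intro i
    rw [hval t j (ν i) (hνmem i), abs_mul]
    exact mul_le_mul_of_nonneg_left (hlow (ν i)) (abs_nonneg _)
  exact spaceable_of_embedding (X := X₀) c0_not_finiteDimensional
    {T' : C(K, ℝ) →L[ℝ] C(K, ℝ) | ¬ IsWeakMultiplier T'} Φ (div_pos hε hM) hΦlow hΦmem

end CaseA
section CaseB
variable {K : Type*} [TopologicalSpace K] [CompactSpace K] [T2Space K]

lemma caseB_spaceable (T : C(K, ℝ) →L[ℝ] C(K, ℝ)) (e : ℕ → C(K, ℝ)) (x : ℕ → K) (p : K)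
    {M ε : ℝ} (hM : 0 < M) (hε : 0 < ε)
    (hd : ∀ i j, i ≠ j → e i * e j = 0) (hbd : ∀ n, ‖e n‖ ≤ M)
    (hlow : ∀ n, ε ≤ |(T (e n)) (x n)|) (hx : Tendsto x atTop (𝓝 p)) :
    ∃ W : Submodule ℝ (C(K, ℝ) →L[ℝ] C(K, ℝ)),
      IsClosed (W : Set (C(K, ℝ) →L[ℝ] C(K, ℝ))) ∧ ¬ FiniteDimensional ℝ W ∧
      (W : Set (C(K, ℝ) →L[ℝ] C(K, ℝ))) ⊆ {T' | ¬ IsWeakMultiplier T'} ∪ {0} := by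
  classical
  -- the evaluation functional at p kills disjoint sequences
  have hL1 : Tendsto (fun n => (T (e n)) p) atTop (𝓝 0) := by
    have := tendsto_eval_zero_of_disjoint ((ContinuousMap.evalCLM ℝ p).comp T) hd hbd
    exact this
  have hev : ∀ᶠ n in atTop, |(T (e n)) p| < ε / 2 := by
    have := Metric.tendsto_nhds.mp hL1 (ε / 2) (by linarith)
    simpa [Real.dist_eq] using this
  obtain ⟨N, hN⟩ := eventually_atTop.mp hev
  -- shifted sequences
  set E : ℕ → C(K, ℝ) := fun n => e (n + N) with hEdef
  set X : ℕ → K := fun n => x (n + N) with hXdef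
  have hdE : ∀ i j, i ≠ j → E i * E j = 0 :=
    fun i j hij => hd (i + N) (j + N) (by omega)
  have hbdE : ∀ n, ‖E n‖ ≤ M := fun n => hbd (n + N)
  have hlowE : ∀ n, ε ≤ |(T (E n)) (X n)| := fun n => hlow (n + N)
  have hsmallE : ∀ n, |(T (E n)) p| < ε / 2 := fun n => hN (n + N) (by omega)
  have hXp : Tendsto X atTop (𝓝 p) := (tendsto_add_atTop_iff_nat N).mpr hx
  have hEne : ∀ n, E n ≠ 0 := by
    intro n h0
    have := hlowE n
    rw [h0] at this
    simp only [map_zero, ContinuousMap.zero_apply, abs_zero] at this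
    linarith
  have hEnorm : ∀ n, (0:ℝ) < ‖E n‖ := fun n => norm_pos_iff.mpr (hEne n)
  have : Nonempty K := ⟨p⟩
  -- peak points
  have hpeak : ∀ m, ∃ yy : K, |(E m) yy| = ‖E m‖ := by
    intro m
    obtain ⟨yy, -, hy⟩ := isCompact_univ.exists_isMaxOn Set.univ_nonempty
      (f := fun s => |(E m) s|) ((E m).continuous.abs.continuousOn)
    refine ⟨yy, le_antisymm ?_ ?_⟩
    · simpa [Real.norm_eq_abs] using (E m).norm_coe_le_norm yy
    · rw [ContinuousMap.norm_le _ (abs_nonneg _)]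
      intro s
      simpa [Real.norm_eq_abs] using hy (Set.mem_univ s)
  choose y hy using hpeak
  -- normalized disjoint bumps
  set u : ℕ → C(K, ℝ) := fun k => (‖E (2*k+1)‖)⁻¹ • |E (2*k+1)| with hudef
  have huapp : ∀ k s, u k s = (‖E (2*k+1)‖)⁻¹ * |(E (2*k+1)) s| := by
    intro k s
    simp [hudef, ContinuousMap.abs_apply]
  have hu1 : ∀ k, ‖u k‖ ≤ 1 := by
    intro k
    rw [ContinuousMap.norm_le _ zero_le_one]
    intro s
    rw [Real.norm_eq_abs, huapp]
    rw [abs_mul, abs_inv, abs_norm, abs_abs]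
    rw [← inv_mul_cancel₀ (ne_of_gt (hEnorm (2*k+1)))]
    apply mul_le_mul_of_nonneg_left _ (by positivity)
    simpa [Real.norm_eq_abs] using (E (2*k+1)).norm_coe_le_norm s
  have huy : ∀ k, u k (y (2*k+1)) = 1 := by
    intro k
    rw [huapp, hy (2*k+1)]
    exact inv_mul_cancel₀ (ne_of_gt (hEnorm (2*k+1)))
  have hudisj : ∀ k k', k ≠ k' → u k * u k' = 0 := by
    intro k k' hkk
    ext s
    rw [ContinuousMap.mul_apply, ContinuousMap.zero_apply, huapp, huapp]
    have : (E (2*k+1)) s = 0 ∨ (E (2*k'+1)) s = 0 :=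
      disj_eval hdE (by omega) s
    rcases this with h' | h' <;> rw [h'] <;> simp
  have hEy0 : ∀ k, (E (2*k)) (y (2*k+1)) = 0 := by
    intro k
    rcases disj_eval hdE (show 2*k ≠ 2*k+1 by omega) (y (2*k+1)) with h' | h'
    · exact h'
    · exfalso
      have := hy (2*k+1)
      rw [h'] at this
      simp only [abs_zero] at this
      exact absurd this.symm (ne_of_gt (hEnorm (2*k+1)))
  -- block index
  set jdx : ℕ → ℕ := fun k => (Nat.unpair k).1 with hjdef
  -- coefficients
  set co : X₀ → C(K, ℝ) → ℕ → ℝ :=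
    fun t f k => t (jdx k) * ((T f) (X (2*k)) - (T f) p) with hcodef
  have hXsub : Tendsto (fun k => X (2*k)) atTop (𝓝 p) := by
    apply hXp.comp
    exact StrictMono.tendsto_atTop (fun a b hab => by omega)
  have htend : ∀ (t : X₀) (f : C(K, ℝ)), Tendsto (fun k => co t f k) atTop (𝓝 0) := by
    intro t f
    have hTf : Tendsto (fun k => (T f) (X (2*k)) - (T f) p) atTop (𝓝 0) := by
      have h1 : Tendsto (fun k => (T f) (X (2*k))) atTop (𝓝 ((T f) p)) :=
        ((T f).continuous.tendsto p).comp hXsub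
      simpa using h1.sub_const ((T f) p)
    have hbd2 : ∀ k, ‖co t f k‖ ≤ ‖t‖ * |(T f) (X (2*k)) - (T f) p| := by
      intro k
      rw [Real.norm_eq_abs, hcodef, abs_mul]
      exact mul_le_mul_of_nonneg_right (c0_apply_le t (jdx k)) (abs_nonneg _)
    have hg : Tendsto (fun k => ‖t‖ * |(T f) (X (2*k)) - (T f) p|) atTop (𝓝 0) := by
      have := hTf.abs.const_mul ‖t‖
      simpa using this
    exact squeeze_zero_norm hbd2 hg
  have hsumB : ∀ (t : X₀) (f : C(K, ℝ)), Summable (fun k => co t f k • u k) :=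
    fun t f => summable_smul_of_disjoint hudisj hu1 (htend t f)
  have hcobound : ∀ (t : X₀) (f : C(K, ℝ)) (k : ℕ), |co t f k| ≤ ‖t‖ * (2 * ‖T‖ * ‖f‖) := by
    intro t f k
    rw [hcodef, abs_mul]
    have h1 : |(T f) (X (2*k)) - (T f) p| ≤ 2 * ‖T‖ * ‖f‖ := by
      have ha : |(T f) (X (2*k))| ≤ ‖T‖ * ‖f‖ := by
        calc |(T f) (X (2*k))| ≤ ‖T f‖ := by
              simpa [Real.norm_eq_abs] using (T f).norm_coe_le_norm (X (2*k))
          _ ≤ ‖T‖ * ‖f‖ := T.le_opNorm f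
      have hb : |(T f) p| ≤ ‖T‖ * ‖f‖ := by
        calc |(T f) p| ≤ ‖T f‖ := by
              simpa [Real.norm_eq_abs] using (T f).norm_coe_le_norm p
          _ ≤ ‖T‖ * ‖f‖ := T.le_opNorm f
      calc |(T f) (X (2*k)) - (T f) p| ≤ |(T f) (X (2*k))| + |(T f) p| := abs_sub _ _
        _ ≤ 2 * ‖T‖ * ‖f‖ := by linarith
    exact mul_le_mul (c0_apply_le t (jdx k)) h1 (abs_nonneg _) (norm_nonneg _)
  -- the operator for a fixed t
  have hLbound : ∀ (t : X₀) (f : C(K, ℝ)), ‖∑' k, co t f k • u k‖ ≤ 2 * ‖T‖ * ‖t‖ * ‖f‖ := by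
    intro t f
    apply norm_tsum_le (hsumB t f)
    intro F
    apply norm_sum_le_of_disjoint hudisj _ F (by positivity)
    intro i _
    calc |co t f i| * ‖u i‖ ≤ (‖t‖ * (2 * ‖T‖ * ‖f‖)) * 1 :=
        mul_le_mul (hcobound t f i) (hu1 i) (norm_nonneg _)
          (by positivity)
      _ = 2 * ‖T‖ * ‖t‖ * ‖f‖ := by ring
  let Ll : X₀ → (C(K, ℝ) →ₗ[ℝ] C(K, ℝ)) := fun t =>
    { toFun := fun f => ∑' k, co t f k • u k
      map_add' := by
        intro f g
        rw [← Summable.tsum_add (hsumB t f) (hsumB t g)]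
        apply tsum_congr
        intro k
        have hc : co t (f + g) k = co t f k + co t g k := by
          simp only [hcodef, map_add, ContinuousMap.add_apply]
          ring
        rw [hc, add_smul]
      map_smul' := by
        intro c f
        simp only [RingHom.id_apply]
        rw [← Summable.tsum_const_smul c (hsumB t f)]
        apply tsum_congr
        intro k
        have hc : co t (c • f) k = c * co t f k := by
          simp only [hcodef, map_smul, ContinuousMap.smul_apply, smul_eq_mul]
          ring
        rw [hc]
        exact (smul_smul c (co t f k) (u k)).symm }
  let Lc : X₀ → (C(K, ℝ) →L[ℝ] C(K, ℝ)) := fun t =>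
    LinearMap.mkContinuous (𝕜 := ℝ) (𝕜₂ := ℝ) (Ll t) (2 * ‖T‖ * ‖t‖)
      (fun f => by exact hLbound t f)
  have hLcapp : ∀ (t : X₀) (f : C(K, ℝ)), Lc t f = ∑' k, co t f k • u k := fun t f => rfl
  let Φl : X₀ →ₗ[ℝ] (C(K, ℝ) →L[ℝ] C(K, ℝ)) :=
    { toFun := Lc
      map_add' := by
        intro s t
        apply ContinuousLinearMap.ext
        intro f
        show (∑' k, co (s + t) f k • u k) = Lc s f + Lc t f
        rw [hLcapp, hLcapp, ← Summable.tsum_add (hsumB s f) (hsumB t f)]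
        apply tsum_congr
        intro k
        have hc : co (s + t) f k = co s f k + co t f k := by
          have h' : (s + t) (jdx k) = s (jdx k) + t (jdx k) := rfl
          simp only [hcodef, h']
          ring
        rw [hc, add_smul]
      map_smul' := by
        intro c t
        simp only [RingHom.id_apply]
        apply ContinuousLinearMap.ext
        intro f
        show (∑' k, co (c • t) f k • u k) = c • (Lc t f)
        rw [hLcapp, ← Summable.tsum_const_smul c (hsumB t f)]
        apply tsum_congr
        intro k
        have hc : co (c • t) f k = c * co t f k := by
          have h' : (c • t) (jdx k) = c * t (jdx k) := rfl
          simp only [hcodef, h']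
          ring
        rw [hc]
        exact (smul_smul c (co t f k) (u k)).symm }
  have hΦbound : ∀ t : X₀, ‖Φl t‖ ≤ (2 * ‖T‖) * ‖t‖ := by
    intro t
    show ‖Lc t‖ ≤ (2 * ‖T‖) * ‖t‖
    have := LinearMap.mkContinuous_norm_le (Ll t) (C := 2 * ‖T‖ * ‖t‖)
      (by positivity) (fun f => by exact hLbound t f)
    calc ‖Lc t‖ ≤ 2 * ‖T‖ * ‖t‖ := this
      _ = (2 * ‖T‖) * ‖t‖ := by ring
  let Φ : X₀ →L[ℝ] (C(K, ℝ) →L[ℝ] C(K, ℝ)) :=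
    LinearMap.mkContinuous (𝕜 := ℝ) (𝕜₂ := ℝ) (E := X₀) (F := C(K, ℝ) →L[ℝ] C(K, ℝ)) Φl (2 * ‖T‖) hΦbound
  -- key evaluation
  have hval : ∀ (t : X₀) (k : ℕ),
      (Φ t (E (2*k))) (y (2*k+1)) = co t (E (2*k)) k := by
    intro t k
    have h0 : (Φ t (E (2*k))) (y (2*k+1))
        = (ContinuousMap.evalCLM ℝ (y (2*k+1))) (∑' k', co t (E (2*k)) k' • u k') := rfl
    rw [h0, (ContinuousMap.evalCLM ℝ (y (2*k+1))).map_tsum (hsumB t (E (2*k)))]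
    have h1 : ∀ k', (ContinuousMap.evalCLM ℝ (y (2*k+1))) (co t (E (2*k)) k' • u k')
        = co t (E (2*k)) k' * u k' (y (2*k+1)) := fun k' => rfl
    calc (∑' k', (ContinuousMap.evalCLM ℝ (y (2*k+1))) (co t (E (2*k)) k' • u k'))
        = (ContinuousMap.evalCLM ℝ (y (2*k+1))) (co t (E (2*k)) k • u k) := by
          apply tsum_eq_single
          intro k' hk'
          rw [h1]
          have hz : u k' (y (2*k+1)) = 0 := by
            have := congrArg (fun f : C(K, ℝ) => f (y (2*k+1))) (hudisj k' k hk')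
            simp only [ContinuousMap.mul_apply, ContinuousMap.zero_apply] at this
            rcases mul_eq_zero.mp this with h' | h'
            · exact h'
            · exfalso; rw [huy k] at h'; norm_num at h'
          rw [hz, mul_zero]
      _ = co t (E (2*k)) k := by rw [h1, huy k, mul_one]
  have hvalabs : ∀ (t : X₀) (k : ℕ),
      |t (jdx k)| * (ε / 2) ≤ |(Φ t (E (2*k))) (y (2*k+1))| := by
    intro t k
    rw [hval, hcodef, abs_mul]
    apply mul_le_mul_of_nonneg_left _ (abs_nonneg _)
    have h1 : ε ≤ |(T (E (2*k))) (X (2*k))| := hlowE (2*k)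
    have h2 : |(T (E (2*k))) p| < ε / 2 := hsmallE (2*k)
    have h3 : |(T (E (2*k))) (X (2*k))| - |(T (E (2*k))) p|
        ≤ |(T (E (2*k))) (X (2*k)) - (T (E (2*k))) p| := abs_sub_abs_le_abs_sub _ _
    linarith
  -- lower bound
  have hΦlow : ∀ t : X₀, (ε / (2 * M)) * ‖t‖ ≤ ‖Φ t‖ := by
    intro t
    have hcoord : ∀ j, |t j| ≤ (2 * M / ε) * ‖Φ t‖ := by
      intro j
      set k := Nat.pair j 0 with hk
      have hjk : jdx k = j := by simp [hjdef, hk, Nat.unpair_pair]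
      have h1 : |t j| * (ε / 2) ≤ |(Φ t (E (2*k))) (y (2*k+1))| := by
        have := hvalabs t k
        rwa [hjk] at this
      have h2 : |(Φ t (E (2*k))) (y (2*k+1))| ≤ ‖Φ t‖ * M := by
        calc |(Φ t (E (2*k))) (y (2*k+1))| ≤ ‖Φ t (E (2*k))‖ := by
              simpa [Real.norm_eq_abs] using (Φ t (E (2*k))).norm_coe_le_norm (y (2*k+1))
          _ ≤ ‖Φ t‖ * ‖E (2*k)‖ := (Φ t).le_opNorm (E (2*k))
          _ ≤ ‖Φ t‖ * M :=
            mul_le_mul_of_nonneg_left (hbdE (2*k)) (ContinuousLinearMap.opNorm_nonneg _)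
      have h3 := le_trans h1 h2
      rw [div_mul_eq_mul_div, le_div_iff₀ hε]
      nlinarith
    have := c0_norm_le t (b := (2 * M / ε) * ‖Φ t‖)
      (mul_nonneg (by positivity) (ContinuousLinearMap.opNorm_nonneg _)) hcoord
    rw [div_mul_eq_mul_div, div_le_iff₀ (by positivity : (0:ℝ) < 2 * M)]
    calc ε * ‖t‖ ≤ ε * ((2 * M / ε) * ‖Φ t‖) := mul_le_mul_of_nonneg_left this hε.le
      _ = ‖Φ t‖ * (2 * M) := by field_simp
  -- membership
  have hΦmem : ∀ t : X₀, t ≠ 0 → ¬ IsWeakMultiplier (Φ t) := by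
    intro t ht hwm
    have hj : ∃ j, t j ≠ 0 := by
      by_contra hc
      push_neg at hc
      exact ht (by ext n; exact hc n)
    obtain ⟨j, htj⟩ := hj
    have hpairinj : Function.Injective (fun i => Nat.pair j i) := by
      intro a b hab
      have h := congrArg (fun z => (Nat.unpair z).2) hab
      simpa [Nat.unpair_pair] using h
    have htt := hwm (fun i => E (2 * Nat.pair j i)) (fun i => y (2 * Nat.pair j i + 1))
      ⟨M, fun i => hbdE _⟩
      (fun i i' hne => hdE _ _ (fun hh => hne (hpairinj (show Nat.pair j i = Nat.pair j i' by omega))))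
      (fun i => hEy0 (Nat.pair j i))
    apply not_tendsto_of_bound
      (mul_pos (abs_pos.mpr htj) (by linarith : (0:ℝ) < ε / 2)) _ htt
    intro i
    have := hvalabs t (Nat.pair j i)
    have hjk : jdx (Nat.pair j i) = j := by simp [hjdef, Nat.unpair_pair]
    rwa [hjk] at this
  exact spaceable_of_embedding (X := X₀) c0_not_finiteDimensional
    {T' : C(K, ℝ) →L[ℝ] C(K, ℝ) | ¬ IsWeakMultiplier T'} Φ
    (by positivity : (0:ℝ) < ε / (2 * M)) hΦlow hΦmem

end CaseB

/-- The set of operators on `C(K, ℝ)` that are not weak multipliers is either empty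
or spaceable. -/
theorem nonWeakMultipliers_empty_or_spaceable
    {K : Type*} [TopologicalSpace K] [CompactSpace K] [T2Space K] :
    {T : C(K, ℝ) →L[ℝ] C(K, ℝ) | ¬ IsWeakMultiplier T} = ∅ ∨
      Spaceable {T : C(K, ℝ) →L[ℝ] C(K, ℝ) | ¬ IsWeakMultiplier T} := by
  classical
  by_cases hE : {T : C(K, ℝ) →L[ℝ] C(K, ℝ) | ¬ IsWeakMultiplier T} = ∅
  · exact Or.inl hE
  right
  obtain ⟨T, hT⟩ := Set.nonempty_iff_ne_empty.mpr hE
  rw [Set.mem_setOf_eq, IsWeakMultiplier] at hT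
  push_neg at hT
  obtain ⟨e, x, hbd0, hd0, hz0, hnt⟩ := hT
  obtain ⟨M0, hM0⟩ := hbd0
  set M := max M0 1 with hMdef
  have hM : 0 < M := lt_of_lt_of_le one_pos (le_max_right _ _)
  have hbd : ∀ n, ‖e n‖ ≤ M := fun n => le_trans (hM0 n) (le_max_left _ _)
  obtain ⟨ε, hε, hinf⟩ := exists_eps_of_not_tendsto hnt
  set φ0 := Nat.nth (fun n => ε ≤ |(T (e n)) (x n)|) with hφ0
  have hinf' : {n | ε ≤ |(T (e n)) (x n)|}.Infinite := hinf
  have hmono : StrictMono φ0 := Nat.nth_strictMono hinf'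
  set e1 : ℕ → C(K, ℝ) := fun n => e (φ0 n) with he1
  set x1 : ℕ → K := fun n => x (φ0 n) with hx1
  have hd1 : ∀ i j, i ≠ j → e1 i * e1 j = 0 :=
    fun i j hij => hd0 _ _ (fun hh => hij (hmono.injective hh))
  have hbd1 : ∀ n, ‖e1 n‖ ≤ M := fun n => hbd _
  have hz1 : ∀ n, (e1 n) (x1 n) = 0 := fun n => hz0 _
  have hlow1 : ∀ n, ε ≤ |(T (e1 n)) (x1 n)| := fun n => Nat.nth_mem_of_infinite hinf' n
  rw [Spaceable]
  by_cases hB : ∃ (p : K) (ψ : ℕ → ℕ), StrictMono ψ ∧ Tendsto (x1 ∘ ψ) atTop (𝓝 p)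
  · obtain ⟨p, ψ, hψ, hψt⟩ := hB
    exact caseB_spaceable T (fun n => e1 (ψ n)) (fun n => x1 (ψ n)) p hM hε
      (fun i j hij => hd1 _ _ (fun hh => hij (hψ.injective hh)))
      (fun n => hbd1 _) (fun n => hlow1 _) hψt
  · push_neg at hB
    have hsplit := fun S hS => exists_split x1 hB S hS
    obtain ⟨B, v, hBinf, hvicc, hvdisj, hvone⟩ := caseA_blocks x1 hsplit
    exact caseA_spaceable T e1 x1 hM hε hd1 hbd1 hz1 hlow1 B v hBinf hvicc hvdisj hvone
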